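/- Let b, c, K, s₁, s₂, s₃ be complex constants with c ≠ 0, and let u be a meromorphic solution of (E). If u has a pole at z₀ ∈ ℂ, then this pole has order exactly 2, and the leading Laurent coefficient α₀ = lim_{z→z₀} (z−z₀)² u(z) equals c or −c. -/

import Mathlib

open Complex Filter Topology

noncomputable section

/-- `u` has a pole at `z₀`: `‖u z‖ → ∞` as `z → z₀`, `z ≠ z₀`. -/
def IsPoleAt (u : ℂ → ℂ) (z₀ : ℂ) : Prop :=
  Tendsto (fun z => ‖u z‖) (𝓝[≠] z₀) atTop

/-- `u` is meromorphic on all of `ℂ`: at every point it is either analytic or has a pole. -/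
def MeromorphicOnPlane (u : ℂ → ℂ) : Prop :=
  ∀ z : ℂ, AnalyticAt ℂ u z ∨ IsPoleAt u z

open Set Metric

lemma IsPoleAt.not_analyticAt {u : ℂ → ℂ} {z : ℂ} (h : IsPoleAt u z) : ¬ AnalyticAt ℂ u z := by
  intro ha
  have hcont : Tendsto (fun w => ‖u w‖) (𝓝[≠] z) (𝓝 ‖u z‖) :=
    (ha.continuousAt.norm.continuousWithinAt : ContinuousWithinAt _ _ _)
  exact not_tendsto_nhds_of_tendsto_atTop h _ hcont

lemma countable_of_punctured_isolated {s : Set ℂ} (h : ∀ x ∈ s, ∀ᶠ z in 𝓝[≠] x, z ∉ s) :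
    s.Countable := by
  have hd : DiscreteTopology s := discreteTopology_subtype_iff.mpr (fun x hx => by
    rw [inf_principal_eq_bot]
    exact h x hx)
  exact (HereditarilyLindelof_LindelofSets s).countable hd

lemma countable_poles (u : ℂ → ℂ) : {z : ℂ | IsPoleAt u z}.Countable := by
  have hsub : {z : ℂ | IsPoleAt u z} ⊆ ⋃ N : ℕ, {z : ℂ | IsPoleAt u z ∧ ‖u z‖ ≤ N} := by
    intro z hz; exact mem_iUnion.2 ⟨⌈‖u z‖⌉₊, hz, Nat.le_ceil _⟩
  refine Set.Countable.mono hsub (Set.countable_iUnion fun N => countable_of_punctured_isolated ?_)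
  rintro x ⟨hx, -⟩
  filter_upwards [hx.eventually (eventually_gt_atTop (N : ℝ))] with z hz
  exact fun hmem => absurd hmem.2 (not_le.mpr hz)

lemma hasDerivAt_mul_zpow {f : ℂ → ℂ} {z z₀ : ℂ} (hf : DifferentiableAt ℂ f z)
    (hz : z ≠ z₀) (k : ℤ) :
    HasDerivAt (fun w => f w * (w - z₀) ^ k)
      ((deriv f z * (z - z₀) + (k : ℂ) * f z) * (z - z₀) ^ (k - 1)) z := by
  have ht : z - z₀ ≠ 0 := sub_ne_zero.mpr hz
  have h1 : HasDerivAt (fun w : ℂ => (w - z₀) ^ k) ((k : ℂ) * (z - z₀) ^ (k - 1)) z := by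
    have := (hasDerivAt_zpow k (z - z₀) (Or.inl ht)).comp z ((hasDerivAt_id z).sub_const z₀)
    rw [mul_one] at this
    exact this
  have h2 := hf.hasDerivAt.mul h1
  refine h2.congr_deriv ?_
  have hk : (z - z₀) ^ k = (z - z₀) ^ (k - 1) * (z - z₀) := by
    rw [← zpow_add_one₀ ht, sub_add_cancel]
  rw [hk]; ring


/-- Local form of a meromorphic function at a pole: `u z = h z * (z - z₀) ^ (-m)` with
`h` analytic and nonvanishing near `z₀`, `m ≥ 1`. -/
lemma local_form {u : ℂ → ℂ} (hmero : MeromorphicOnPlane u) {z₀ : ℂ} (hpole : IsPoleAt u z₀) :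
    ∃ (m : ℕ) (h : ℂ → ℂ) (ρ : ℝ), 1 ≤ m ∧ 0 < ρ ∧ h z₀ ≠ 0 ∧
      (∀ z ∈ Metric.ball z₀ ρ, AnalyticAt ℂ h z) ∧
      ∀ z ∈ Metric.ball z₀ ρ \ {z₀}, AnalyticAt ℂ u z ∧ u z = h z * (z - z₀) ^ (-(m : ℤ)) := by
  classical
  have hna : ¬ AnalyticAt ℂ u z₀ := hpole.not_analyticAt
  -- radius where ‖u‖ ≥ 1 on punctured ball
  obtain ⟨r, hr0, hru⟩ : ∃ r > 0, ∀ z ∈ Metric.ball z₀ r \ {z₀}, 1 ≤ ‖u z‖ := by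
    have hev := hpole.eventually (eventually_ge_atTop (1 : ℝ))
    rcases (nhdsWithin_hasBasis Metric.nhds_basis_ball _).mem_iff.1 hev with ⟨r, hr, hsub⟩
    exact ⟨r, hr, fun z hz => hsub ⟨hz.1, hz.2⟩⟩
  set v : ℂ → ℂ := fun z => if AnalyticAt ℂ u z then (u z)⁻¹ else 0 with hv_def
  have hvu : ∀ z, AnalyticAt ℂ u z → v z = (u z)⁻¹ := fun z hz => if_pos hz
  have hvp : ∀ z, ¬ AnalyticAt ℂ u z → v z = 0 := fun z hz => if_neg hz
  have hune : ∀ z ∈ Metric.ball z₀ r, z ≠ z₀ → u z ≠ 0 := by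
    intro z hz hzz h0
    have := hru z ⟨hz, hzz⟩
    rw [h0] at this; norm_num at this
  -- v analytic at analytic non-vanishing points of u
  have hv_an : ∀ p : ℂ, AnalyticAt ℂ u p → u p ≠ 0 → AnalyticAt ℂ v p := by
    intro p hp hup
    have hev : (fun z => (u z)⁻¹) =ᶠ[𝓝 p] v := by
      filter_upwards [hp.eventually_analyticAt] with z hz
      exact (hvu z hz).symm
    exact (hp.inv hup).congr hev
  -- v continuous at poles of u
  have hv_pole : ∀ p : ℂ, IsPoleAt u p → ContinuousAt v p := by
    intro p hp
    have hvz : v p = 0 := hvp p hp.not_analyticAt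
    rw [ContinuousAt, hvz, ← nhdsNE_sup_pure p, tendsto_sup]
    constructor
    · rw [tendsto_zero_iff_norm_tendsto_zero]
      have hb : Tendsto (fun z => ‖u z‖⁻¹) (𝓝[≠] p) (𝓝 0) := hp.inv_tendsto_atTop
      refine tendsto_of_tendsto_of_tendsto_of_le_of_le tendsto_const_nhds hb
        (fun z => norm_nonneg _) ?_
      intro z
      show ‖v z‖ ≤ ‖u z‖⁻¹
      by_cases hz : AnalyticAt ℂ u z
      · rw [hvu z hz, norm_inv]
      · rw [hvp z hz, norm_zero]; positivity
    · exact hvz ▸ tendsto_pure_nhds v p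
  -- v is analytic at z₀ by removable singularity off the countable set of poles
  have hvan : AnalyticAt ℂ v z₀ := by
    have hrh : (0:ℝ) < r / 2 := by linarith
    set R : NNReal := ⟨r / 2, hrh.le⟩ with hR_def
    have hRr : ∀ x ∈ Metric.closedBall z₀ (R : ℝ), x ∈ Metric.ball z₀ r := by
      intro x hx
      have : dist x z₀ ≤ r / 2 := hx
      exact lt_of_le_of_lt this (by linarith)
    have hcont : ContinuousOn v (Metric.closedBall z₀ (R : ℝ)) := by
      intro p hpmem
      apply ContinuousAt.continuousWithinAt
      rcases hmero p with hp | hp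
      · have hpz : p ≠ z₀ := fun h => hna (h ▸ hp)
        exact (hv_an p hp (hune p (hRr p hpmem) hpz)).continuousAt
      · exact hv_pole p hp
    have hdiff : ∀ z ∈ Metric.ball z₀ (R : ℝ) \ {z : ℂ | IsPoleAt u z}, DifferentiableAt ℂ v z := by
      rintro z ⟨hz1, hz2⟩
      rcases hmero z with hz | hz
      · have hpz : z ≠ z₀ := fun h => hna (h ▸ hz)
        exact (hv_an z hz (hune z (hRr z (Metric.ball_subset_closedBall hz1)) hpz)).differentiableAt
      · exact absurd hz hz2
    have hR0 : 0 < R := by exact_mod_cast hrh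
    exact (Complex.hasFPowerSeriesOnBall_of_differentiable_off_countable
      (countable_poles u) hcont hdiff hR0).analyticAt
  have hv0 : v z₀ = 0 := hvp z₀ hna
  -- v is not identically zero near z₀
  have hvne : ¬ ∀ᶠ z in 𝓝 z₀, v z = 0 := by
    intro hev
    set S : Set ℂ := ({z : ℂ | IsPoleAt u z} ∪ {z₀})ᶜ with hS_def
    have hd : Dense S := ((countable_poles u).union (Set.countable_singleton z₀)).dense_compl ℂ
    have hne : (𝓝[S] z₀).NeBot := mem_closure_iff_nhdsWithin_neBot.mp (hd z₀)
    have hev2 : ∀ᶠ z in 𝓝[S] z₀, v z = 0 ∧ z ∈ Metric.ball z₀ r ∧ z ∈ S := by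
      filter_upwards [nhdsWithin_le_nhds hev,
        nhdsWithin_le_nhds (Metric.ball_mem_nhds z₀ hr0), self_mem_nhdsWithin] with z h1 h2 h3
      exact ⟨h1, h2, h3⟩
    obtain ⟨z, h1, h2, h3⟩ := hev2.exists
    have hznp : ¬ IsPoleAt u z := fun h => h3 (Or.inl h)
    have hzz : z ≠ z₀ := fun h => h3 (Or.inr h)
    have hza : AnalyticAt ℂ u z := (hmero z).resolve_right hznp
    have := hune z h2 hzz
    rw [hvu z hza] at h1
    exact this (inv_eq_zero.mp h1)
  -- factor v
  have hord : analyticOrderAt v z₀ ≠ ⊤ := by rw [Ne, analyticOrderAt_eq_top]; exact hvne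
  set m : ℕ := (analyticOrderAt v z₀).toNat with hm_def
  have hordm : analyticOrderAt v z₀ = (m : ℕ∞) := (ENat.coe_toNat hord).symm
  obtain ⟨g, hg, hg0, hgv⟩ := hvan.analyticOrderAt_eq_natCast.mp hordm
  have hm1 : 1 ≤ m := by
    rcases Nat.eq_zero_or_pos m with hm0 | h; swap; · exact h
    exfalso
    have := hgv.self_of_nhds
    rw [hv0, hm0, pow_zero, one_smul] at this
    exact hg0 this.symm
  -- the local factor h = g⁻¹
  refine ⟨m, fun z => (g z)⁻¹, ?_⟩
  have hloc : ∀ᶠ z in 𝓝 z₀, AnalyticAt ℂ g z ∧ g z ≠ 0 ∧ v z = (z - z₀) ^ m * g z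
      ∧ z ∈ Metric.ball z₀ r := by
    filter_upwards [hg.eventually_analyticAt, hg.continuousAt.eventually_ne hg0, hgv,
      Metric.ball_mem_nhds z₀ hr0] with z h1 h2 h3 h4
    exact ⟨h1, h2, by rwa [smul_eq_mul] at h3, h4⟩
  rcases Metric.eventually_nhds_iff_ball.mp hloc with ⟨ρ, hρ0, hρ⟩
  refine ⟨ρ, hm1, hρ0, inv_ne_zero hg0, fun z hz => ((hρ z hz).1).inv (hρ z hz).2.1, ?_⟩
  rintro z ⟨hz, hzz⟩
  obtain ⟨hga, hgz, hvz, hzr⟩ := hρ z hz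
  have hzz' : z ≠ z₀ := hzz
  have ht : z - z₀ ≠ 0 := sub_ne_zero.mpr hzz'
  have hvnz : v z ≠ 0 := by rw [hvz]; exact mul_ne_zero (pow_ne_zero _ ht) hgz
  have hza : AnalyticAt ℂ u z := by
    by_contra hcon
    exact hvnz (hvp z hcon)
  refine ⟨hza, ?_⟩
  have huv : v z = (u z)⁻¹ := hvu z hza
  have hunz : u z ≠ 0 := hune z hzr hzz'
  have : u z = (v z)⁻¹ := by rw [huv, inv_inv]
  rw [this, hvz, mul_inv, zpow_neg, zpow_natCast, mul_comm]

/-- Equation (E) at the point `z`. -/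
def SatisfiesE (b c K s₁ s₂ s₃ : ℂ) (u : ℂ → ℂ) (z : ℂ) : Prop :=
  deriv u z * iteratedDeriv 3 u z - (1/2) * (iteratedDeriv 2 u z)^2
    + 30 * b * (deriv u z)^2
    - (30 / c^2) * ((u z)^4 - 4*s₁*(u z)^3 + 6*s₂*(u z)^2 - 4*s₃*(u z)
        + 3*s₁^4 - 6*s₁^2*s₂ + 4*s₁*s₃) = K

/-- A meromorphic solution of (E). -/
def IsMeromorphicSolution (b c K s₁ s₂ s₃ : ℂ) (u : ℂ → ℂ) : Prop :=
  MeromorphicOnPlane u ∧ ∀ z : ℂ, AnalyticAt ℂ u z → SatisfiesE b c K s₁ s₂ s₃ u z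

set_option maxHeartbeats 1000000 in
/-- Any pole of a meromorphic solution of (E) is a double pole, whose leading Laurent
coefficient `α₀ = lim_{z→z₀} (z−z₀)² u(z)` equals `c` or `−c`. -/
theorem pole_is_double_with_leading_coefficient_pm_c
    (b c K s₁ s₂ s₃ : ℂ) (hc : c ≠ 0)
    (u : ℂ → ℂ) (hu : IsMeromorphicSolution b c K s₁ s₂ s₃ u)
    (z₀ : ℂ) (hpole : IsPoleAt u z₀) :
    ∃ α₀ : ℂ, (α₀ = c ∨ α₀ = -c) ∧
      Tendsto (fun z => (z - z₀)^2 * u z) (𝓝[≠] z₀) (𝓝 α₀) := by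
  obtain ⟨hmero, hsol⟩ := hu
  obtain ⟨m, h, ρ, hm1, hρ0, hα0, hh, hrep⟩ := local_form hmero hpole
  set α := h z₀ with hα_def
  set Ω := Metric.ball z₀ ρ \ {z₀} with hΩdef
  have hΩo : IsOpen Ω := isOpen_ball.sdiff isClosed_singleton
  have hΩmem : Ω ∈ 𝓝[≠] z₀ := diff_mem_nhdsWithin_compl (Metric.ball_mem_nhds _ hρ0) {z₀}
  have hcenter : z₀ ∈ Metric.ball z₀ ρ := Metric.mem_ball_self hρ0
  have Hh : AnalyticOnNhd ℂ h (Metric.ball z₀ ρ) := fun z hz => hh z hz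
  -- derivative step
  have step : ∀ (f F : ℂ → ℂ) (k : ℤ), AnalyticOnNhd ℂ f (Metric.ball z₀ ρ) →
      (∀ z ∈ Ω, F z = f z * (z - z₀) ^ k) →
      ∀ z ∈ Ω, deriv F z = (deriv f z * (z - z₀) + (k : ℂ) * f z) * (z - z₀) ^ (k - 1) := by
    intro f F k hf hF z hz
    have hev : F =ᶠ[𝓝 z] fun w => f w * (w - z₀) ^ k := eventually_of_mem (hΩo.mem_nhds hz) hF
    rw [hev.deriv_eq]
    exact (hasDerivAt_mul_zpow (hf z hz.1).differentiableAt hz.2 k).deriv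
  have stepA : ∀ f : ℂ → ℂ, AnalyticOnNhd ℂ f (Metric.ball z₀ ρ) → ∀ kc : ℂ,
      AnalyticOnNhd ℂ (fun z => deriv f z * (z - z₀) + kc * f z) (Metric.ball z₀ ρ) := by
    intro f hf kc z hz
    exact ((hf.deriv z hz).mul ((analyticAt_id).sub analyticAt_const)).add
      (analyticAt_const.mul (hf z hz))
  set h₁ : ℂ → ℂ := fun z => deriv h z * (z - z₀) + ((-(m:ℤ) : ℤ) : ℂ) * h z with hh₁def
  set h₂ : ℂ → ℂ := fun z => deriv h₁ z * (z - z₀) + ((-(m:ℤ) - 1 : ℤ) : ℂ) * h₁ z with hh₂def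
  set h₃ : ℂ → ℂ := fun z => deriv h₂ z * (z - z₀) + ((-(m:ℤ) - 1 - 1 : ℤ) : ℂ) * h₂ z with hh₃def
  have Hh₁ : AnalyticOnNhd ℂ h₁ (Metric.ball z₀ ρ) := stepA h Hh _
  have Hh₂ : AnalyticOnNhd ℂ h₂ (Metric.ball z₀ ρ) := stepA h₁ Hh₁ _
  have Hh₃ : AnalyticOnNhd ℂ h₃ (Metric.ball z₀ ρ) := stepA h₂ Hh₂ _
  have d0 : ∀ z ∈ Ω, u z = h z * (z - z₀) ^ (-(m:ℤ)) := fun z hz => (hrep z hz).2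
  have d1 : ∀ z ∈ Ω, deriv u z = h₁ z * (z - z₀) ^ (-(m:ℤ) - 1) := step h u _ Hh d0
  have d2 : ∀ z ∈ Ω, deriv (deriv u) z = h₂ z * (z - z₀) ^ (-(m:ℤ) - 1 - 1) :=
    step h₁ (deriv u) _ Hh₁ d1
  have d3 : ∀ z ∈ Ω, deriv (deriv (deriv u)) z = h₃ z * (z - z₀) ^ (-(m:ℤ) - 1 - 1 - 1) :=
    step h₂ (deriv (deriv u)) _ Hh₂ d2
  -- values at the center
  have hv1 : h₁ z₀ = -(m:ℂ) * α := by
    simp only [hh₁def]; rw [sub_self, mul_zero, zero_add, hα_def]; push_cast; ring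
  have hv2 : h₂ z₀ = (-(m:ℂ) - 1) * h₁ z₀ := by
    simp only [hh₂def]; rw [sub_self, mul_zero, zero_add]; push_cast; ring
  have hv3 : h₃ z₀ = (-(m:ℂ) - 2) * h₂ z₀ := by
    simp only [hh₃def]; rw [sub_self, mul_zero, zero_add]; push_cast; ring
  -- continuity at the center
  have ch : ContinuousAt h z₀ := (Hh z₀ hcenter).continuousAt
  have ch1 : ContinuousAt h₁ z₀ := (Hh₁ z₀ hcenter).continuousAt
  have ch2 : ContinuousAt h₂ z₀ := (Hh₂ z₀ hcenter).continuousAt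
  have ch3 : ContinuousAt h₃ z₀ := (Hh₃ z₀ hcenter).continuousAt
  -- the differential equation on Ω
  have heq : ∀ z ∈ Ω, deriv u z * deriv (deriv (deriv u)) z - (1/2) * (deriv (deriv u) z)^2
      + 30*b*(deriv u z)^2 - (30/c^2) * ((u z)^4 - 4*s₁*(u z)^3 + 6*s₂*(u z)^2 - 4*s₃*(u z)
        + 3*s₁^4 - 6*s₁^2*s₂ + 4*s₁*s₃) = K := by
    intro z hz
    have hE := hsol z (hrep z hz).1
    unfold SatisfiesE at hE
    rwa [show (3:ℕ) = 2+1 from rfl, iteratedDeriv_succ, show (2:ℕ) = 1+1 from rfl,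
      iteratedDeriv_succ, iteratedDeriv_one] at hE
  -- limit machine
  have hlim : ∀ (A : ℂ → ℂ) (q : ℕ), q ≠ 0 → ContinuousAt A z₀ →
      (∀ z ∈ Ω, A z = K * (z - z₀)^q) → A z₀ = 0 := by
    intro A q hq hA hAeq
    have h1 : Tendsto A (𝓝[≠] z₀) (𝓝 (A z₀)) := hA.continuousWithinAt
    have h2 : Tendsto (fun z => K * (z - z₀)^q) (𝓝[≠] z₀) (𝓝 0) := by
      have hcont : ContinuousAt (fun z => K * (z - z₀)^q) z₀ := by fun_prop
      have h2' : Tendsto (fun z => K * (z - z₀)^q) (𝓝[≠] z₀) (𝓝 (K * (z₀ - z₀)^q)) :=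
        hcont.continuousWithinAt
      rw [sub_self, zero_pow hq, mul_zero] at h2'
      exact h2'
    have h1' : Tendsto (fun z => K * (z - z₀)^q) (𝓝[≠] z₀) (𝓝 (A z₀)) :=
      h1.congr' (eventually_of_mem hΩmem hAeq)
    exact tendsto_nhds_unique h1' h2
  have zconv : ∀ (w : ℂ) (a : ℕ), w ^ (-(a:ℤ)) = (w ^ a)⁻¹ := fun w a => by
    rw [zpow_neg, zpow_natCast]
  have mconv : ∀ (x w : ℂ) (a : ℕ), w ≠ 0 → x * (w ^ a)⁻¹ * w ^ a = x := by
    intro x w a hw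
    rw [mul_assoc, inv_mul_cancel₀ (pow_ne_zero _ hw), mul_one]
  rcases (by omega : m = 1 ∨ m = 2 ∨ 3 ≤ m) with hm | hm | hm3
  · -- m = 1 : contradiction
    exfalso
    have hmc : ((m:ℕ) : ℂ) = 1 := by rw [hm]; norm_num
    have e0 : ∀ z ∈ Ω, u z = h z * ((z - z₀)^(1:ℕ))⁻¹ := by
      intro z hz; rw [d0 z hz, show (-(m:ℤ)) = -((1:ℕ):ℤ) by rw [hm], zconv]
    have e1 : ∀ z ∈ Ω, deriv u z = h₁ z * ((z - z₀)^(2:ℕ))⁻¹ := by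
      intro z hz; rw [d1 z hz, show (-(m:ℤ) - 1) = -((2:ℕ):ℤ) by rw [hm]; norm_num, zconv]
    have e2 : ∀ z ∈ Ω, deriv (deriv u) z = h₂ z * ((z - z₀)^(3:ℕ))⁻¹ := by
      intro z hz; rw [d2 z hz, show (-(m:ℤ) - 1 - 1) = -((3:ℕ):ℤ) by rw [hm]; norm_num, zconv]
    have e3 : ∀ z ∈ Ω, deriv (deriv (deriv u)) z = h₃ z * ((z - z₀)^(4:ℕ))⁻¹ := by
      intro z hz; rw [d3 z hz, show (-(m:ℤ) - 1 - 1 - 1) = -((4:ℕ):ℤ) by rw [hm]; norm_num, zconv]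
    have E0 : ∀ z ∈ Ω, u z * (z - z₀)^(1:ℕ) = h z := fun z hz =>
      by rw [e0 z hz]; exact mconv _ _ _ (sub_ne_zero.mpr hz.2)
    have E1 : ∀ z ∈ Ω, deriv u z * (z - z₀)^(2:ℕ) = h₁ z := fun z hz =>
      by rw [e1 z hz]; exact mconv _ _ _ (sub_ne_zero.mpr hz.2)
    have E2 : ∀ z ∈ Ω, deriv (deriv u) z * (z - z₀)^(3:ℕ) = h₂ z := fun z hz =>
      by rw [e2 z hz]; exact mconv _ _ _ (sub_ne_zero.mpr hz.2)
    have E3 : ∀ z ∈ Ω, deriv (deriv (deriv u)) z * (z - z₀)^(4:ℕ) = h₃ z := fun z hz =>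
      by rw [e3 z hz]; exact mconv _ _ _ (sub_ne_zero.mpr hz.2)
    have h0 := hlim (fun z => (h₁ z * h₃ z - (1/2) * (h₂ z)^2) + 30*b*(h₁ z)^2*(z - z₀)^2
        - (30/c^2) * ((h z)^4*(z - z₀)^2 - 4*s₁*(h z)^3*(z - z₀)^3 + 6*s₂*(h z)^2*(z - z₀)^4
          - 4*s₃*(h z)*(z - z₀)^5 + (3*s₁^4 - 6*s₁^2*s₂ + 4*s₁*s₃)*(z - z₀)^6)) 6
      (by norm_num) (by fun_prop) (by
        intro z hz
        beta_reduce
        rw [← heq z hz, ← E0 z hz, ← E1 z hz, ← E2 z hz, ← E3 z hz]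
        ring)
    norm_num [sub_self, hv3, hv2, hv1, hmc] at h0
    have hsq : α ^ 2 = 0 := by linear_combination h0 / 4
    exact hα0 ((pow_eq_zero_iff two_ne_zero).mp hsq)
  · -- m = 2 : the generic double pole
    have hmc : ((m:ℕ) : ℂ) = 2 := by rw [hm]; norm_num
    have e0 : ∀ z ∈ Ω, u z = h z * ((z - z₀)^(2:ℕ))⁻¹ := by
      intro z hz; rw [d0 z hz, show (-(m:ℤ)) = -((2:ℕ):ℤ) by rw [hm], zconv]
    have e1 : ∀ z ∈ Ω, deriv u z = h₁ z * ((z - z₀)^(3:ℕ))⁻¹ := by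
      intro z hz; rw [d1 z hz, show (-(m:ℤ) - 1) = -((3:ℕ):ℤ) by rw [hm]; norm_num, zconv]
    have e2 : ∀ z ∈ Ω, deriv (deriv u) z = h₂ z * ((z - z₀)^(4:ℕ))⁻¹ := by
      intro z hz; rw [d2 z hz, show (-(m:ℤ) - 1 - 1) = -((4:ℕ):ℤ) by rw [hm]; norm_num, zconv]
    have e3 : ∀ z ∈ Ω, deriv (deriv (deriv u)) z = h₃ z * ((z - z₀)^(5:ℕ))⁻¹ := by
      intro z hz; rw [d3 z hz, show (-(m:ℤ) - 1 - 1 - 1) = -((5:ℕ):ℤ) by rw [hm]; norm_num, zconv]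
    have E0 : ∀ z ∈ Ω, u z * (z - z₀)^(2:ℕ) = h z := fun z hz =>
      by rw [e0 z hz]; exact mconv _ _ _ (sub_ne_zero.mpr hz.2)
    have E1 : ∀ z ∈ Ω, deriv u z * (z - z₀)^(3:ℕ) = h₁ z := fun z hz =>
      by rw [e1 z hz]; exact mconv _ _ _ (sub_ne_zero.mpr hz.2)
    have E2 : ∀ z ∈ Ω, deriv (deriv u) z * (z - z₀)^(4:ℕ) = h₂ z := fun z hz =>
      by rw [e2 z hz]; exact mconv _ _ _ (sub_ne_zero.mpr hz.2)
    have E3 : ∀ z ∈ Ω, deriv (deriv (deriv u)) z * (z - z₀)^(5:ℕ) = h₃ z := fun z hz =>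
      by rw [e3 z hz]; exact mconv _ _ _ (sub_ne_zero.mpr hz.2)
    have h0 := hlim (fun z => (h₁ z * h₃ z - (1/2) * (h₂ z)^2) + 30*b*(h₁ z)^2*(z - z₀)^2
        - (30/c^2) * ((h z)^4 - 4*s₁*(h z)^3*(z - z₀)^2 + 6*s₂*(h z)^2*(z - z₀)^4
          - 4*s₃*(h z)*(z - z₀)^6 + (3*s₁^4 - 6*s₁^2*s₂ + 4*s₁*s₃)*(z - z₀)^8)) 8
      (by norm_num) (by fun_prop) (by
        intro z hz
        beta_reduce
        rw [← heq z hz, ← E0 z hz, ← E1 z hz, ← E2 z hz, ← E3 z hz]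
        ring)
    norm_num [sub_self, hv3, hv2, hv1, hmc] at h0
    field_simp at h0
    have key' : α^2 * ((α - c) * (α + c)) = 0 := by rw [← hα_def] at h0; linear_combination (-1/30 : ℂ) * h0
    have key : (α - c) * (α + c) = 0 := by
      rcases mul_eq_zero.mp key' with hk | hk
      · exact absurd ((pow_eq_zero_iff two_ne_zero).mp hk) hα0
      · exact hk
    refine ⟨α, ?_, ?_⟩
    · rcases mul_eq_zero.mp key with hk | hk
      · exact Or.inl (sub_eq_zero.mp hk)
      · exact Or.inr (eq_neg_of_add_eq_zero_left hk)
    · have hev : ∀ z ∈ Ω, h z = (z - z₀)^2 * u z := by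
        intro z hz
        have ht : z - z₀ ≠ 0 := sub_ne_zero.mpr hz.2
        rw [e0 z hz]
        field_simp
      have hbase : Tendsto h (𝓝[≠] z₀) (𝓝 α) := ch.continuousWithinAt
      exact hbase.congr' (eventually_of_mem hΩmem hev)
  · -- m ≥ 3 : contradiction
    exfalso
    obtain ⟨k, hk⟩ := Nat.exists_eq_add_of_le hm3
    have e0 : ∀ z ∈ Ω, u z = h z * ((z - z₀)^(3+k:ℕ))⁻¹ := by
      intro z hz; rw [d0 z hz, show (-(m:ℤ)) = -((3+k:ℕ):ℤ) by rw [hk], zconv]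
    have e1 : ∀ z ∈ Ω, deriv u z = h₁ z * ((z - z₀)^(4+k:ℕ))⁻¹ := by
      intro z hz
      rw [d1 z hz, show (-(m:ℤ) - 1) = -((4+k:ℕ):ℤ) by rw [hk]; push_cast; ring, zconv]
    have e2 : ∀ z ∈ Ω, deriv (deriv u) z = h₂ z * ((z - z₀)^(5+k:ℕ))⁻¹ := by
      intro z hz
      rw [d2 z hz, show (-(m:ℤ) - 1 - 1) = -((5+k:ℕ):ℤ) by rw [hk]; push_cast; ring, zconv]
    have e3 : ∀ z ∈ Ω, deriv (deriv (deriv u)) z = h₃ z * ((z - z₀)^(6+k:ℕ))⁻¹ := by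
      intro z hz
      rw [d3 z hz, show (-(m:ℤ) - 1 - 1 - 1) = -((6+k:ℕ):ℤ) by rw [hk]; push_cast; ring, zconv]
    have E0 : ∀ z ∈ Ω, u z * (z - z₀)^(3+k:ℕ) = h z := fun z hz =>
      by rw [e0 z hz]; exact mconv _ _ _ (sub_ne_zero.mpr hz.2)
    have E1 : ∀ z ∈ Ω, deriv u z * (z - z₀)^(4+k:ℕ) = h₁ z := fun z hz =>
      by rw [e1 z hz]; exact mconv _ _ _ (sub_ne_zero.mpr hz.2)
    have E2 : ∀ z ∈ Ω, deriv (deriv u) z * (z - z₀)^(5+k:ℕ) = h₂ z := fun z hz =>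
      by rw [e2 z hz]; exact mconv _ _ _ (sub_ne_zero.mpr hz.2)
    have E3 : ∀ z ∈ Ω, deriv (deriv (deriv u)) z * (z - z₀)^(6+k:ℕ) = h₃ z := fun z hz =>
      by rw [e3 z hz]; exact mconv _ _ _ (sub_ne_zero.mpr hz.2)
    have h0 := hlim (fun z => (h₁ z * h₃ z - (1/2) * (h₂ z)^2)*(z - z₀)^(2*k+2)
        + 30*b*(h₁ z)^2*(z - z₀)^(2*k+4)
        - (30/c^2) * ((h z)^4 - 4*s₁*(h z)^3*(z - z₀)^(3+k) + 6*s₂*(h z)^2*(z - z₀)^(2*k+6)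
          - 4*s₃*(h z)*(z - z₀)^(3*k+9) + (3*s₁^4 - 6*s₁^2*s₂ + 4*s₁*s₃)*(z - z₀)^(4*k+12)))
      (4*k+12) (by omega) (by fun_prop) (by
        intro z hz
        beta_reduce
        rw [← heq z hz, ← E0 z hz, ← E1 z hz, ← E2 z hz, ← E3 z hz]
        ring)
    simp only [sub_self] at h0
    rw [zero_pow (by omega : 2*k+2 ≠ 0), zero_pow (by omega : 2*k+4 ≠ 0),
      zero_pow (by omega : 3+k ≠ 0), zero_pow (by omega : 2*k+6 ≠ 0),
      zero_pow (by omega : 3*k+9 ≠ 0), zero_pow (by omega : 4*k+12 ≠ 0)] at h0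
    have hc2 : c^2 ≠ 0 := pow_ne_zero _ hc
    field_simp at h0
    simp at h0
    exact hα0 (by simpa [hα_def] using h0)

end
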